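/- The formal Laurent series f_y(x⟨t⟩,y⟨t⟩) = 2y⟨t⟩+μ₁x⟨t⟩+μ₃ factors as (1/(tt')³)·(t-t')·(t² + higher order terms in ℤ[μ⃗][[t]]), where t' ∈ t·ℤ[μ₁,μ₃][[t]] is the involution series; equivalently (t-t')·x⟨t⟩/(tt') = y⟨t⟩ - y⟨t'⟩. -/

import Mathlib

noncomputable section

/-- The coefficient ring `ℤ[μ₁,μ₂,μ₃,μ₄,μ₆]`. -/
abbrev CoefRing : Type := MvPolynomial (Fin 5) ℤ

def μ1 : CoefRing := MvPolynomial.X 0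
def μ2 : CoefRing := MvPolynomial.X 1
def μ3 : CoefRing := MvPolynomial.X 2
def μ4 : CoefRing := MvPolynomial.X 3
def μ6 : CoefRing := MvPolynomial.X 4

open PowerSeries in
/-- The functional equation `s = (1 + μ₂s + μ₄s² + μ₆s³)t² + (μ₁s + μ₃s²)t`
satisfied by `s = 1/x` in the arithmetic parameter `t = -x/y` of the curve
`y² + (μ₁x+μ₃)y = x³ + μ₂x² + μ₄x + μ₆`. -/
def SFunEq (s : PowerSeries CoefRing) : Prop :=
  s = (1 + C μ2 * s + C μ4 * s ^ 2 + C μ6 * s ^ 3) * X ^ 2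
      + (C μ1 * s + C μ3 * s ^ 2) * X

/-- Embedding of power series into formal Laurent series. -/
abbrev toL : PowerSeries CoefRing →+* LaurentSeries CoefRing :=
  HahnSeries.ofPowerSeries ℤ CoefRing

/-- The Laurent series `t`. -/
def tL : LaurentSeries CoefRing := HahnSeries.single (1 : ℤ) (1 : CoefRing)

/-- Constant Laurent series. -/
abbrev CL : CoefRing →+* LaurentSeries CoefRing := HahnSeries.C

/-- `IsXY s x y` says: `s` is the canonical solution of the functional equation,
`x = 1/s` (the expansion `x⟨t⟩` of the `x`-coordinate) and `y = -x/t`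
(the expansion `y⟨t⟩` of the `y`-coordinate). -/
structure IsXY (s : PowerSeries CoefRing)
    (x y : LaurentSeries CoefRing) : Prop where
  s0 : PowerSeries.constantCoeff s = 0
  seq : SFunEq s
  hx : x * toL s = 1
  hy : y * tL = -x

open PowerSeries in
/-- **(Lemma 3.07.)** `f_y(x⟨t⟩,y⟨t⟩) = (1/(tt')³)·(t-t')·(t² + ⋯)` with the
last factor in `t² + t³ℤ[μ⃗][[t]]`; equivalently
`(t-t')·x⟨t⟩/(tt') = y⟨t⟩ - y⟨t'⟩`.  Here `t'` is the involution series and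
`y⟨t'⟩ = -x⟨t⟩/t'`. -/
theorem statement12 (s : PowerSeries CoefRing) (x y : LaurentSeries CoefRing)
    (h : IsXY s x y) (T' : PowerSeries CoefRing)
    (hT' : toL T' * (y + CL μ1 * x + CL μ3) = x)
    (Y' : LaurentSeries CoefRing) (hY' : Y' * toL T' = -x) :
    (tL - toL T') * x = (y - Y') * (tL * toL T') ∧
    ∃ g : PowerSeries CoefRing,
      constantCoeff g = 0 ∧
      coeff 1 g = 0 ∧
      coeff 2 g = 1 ∧
      (2 * y + CL μ1 * x + CL μ3) * (tL * toL T') ^ 3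
        = (tL - toL T') * toL g := by
  obtain ⟨hs0, hseq, hx, hy⟩ := h
  have hseq' : s = (1 + C μ2 * s + C μ4 * s ^ 2 + C μ6 * s ^ 3)
      * X ^ 2 + (C μ1 * s + C μ3 * s ^ 2) * X := hseq
  have hXne : (X : PowerSeries CoefRing) ≠ 0 := X_ne_zero
  have htX : tL = toL X := HahnSeries.ofPowerSeries_X.symm
  -- Factor `s = X ^ 2 * d` with `d` of constant coefficient 1.
  obtain ⟨c, hc⟩ := X_dvd_iff.mpr hs0
  set A : PowerSeries CoefRing :=
    1 + C μ2 * s + C μ4 * s ^ 2 + C μ6 * s ^ 3 with hA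
  have hc2 : c = A * X + (C μ1 * s + C μ3 * s ^ 2) :=
    mul_left_cancel₀ hXne (by rw [← hc]; linear_combination hseq')
  have hc0 : constantCoeff c = 0 := by
    have := congrArg (constantCoeff) hc2
    simpa [hA, hs0] using this
  obtain ⟨d, hd⟩ := X_dvd_iff.mpr hc0
  have hs2 : s = X ^ 2 * d := by rw [hc, hd]; ring
  have hd2 : d = A + C μ1 * (X * d) + C μ3 * (X ^ 3 * d ^ 2) :=
    mul_left_cancel₀ hXne (by
      linear_combination hc2 - hd + (C μ1 + C μ3 * (s + X ^ 2 * d)) * hs2)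
  have hd0 : constantCoeff d = 1 := by
    have := congrArg (constantCoeff) hd2
    simpa [hA, hs0] using this
  obtain ⟨u, hu⟩ : IsUnit d := isUnit_iff_constantCoeff.mpr (by rw [hd0]; exact isUnit_one)
  -- The equation determining `T'` at the power-series level.
  set P : PowerSeries CoefRing := C μ1 * X + C μ3 * (X * s) - 1 with hP
  have hL : toL T' * (CL μ1 * tL + CL μ3 * (tL * toL s) - 1) = tL := by
    linear_combination (tL * toL s) * hT' - (toL T' * toL s) * hy
      + (toL T' + tL - CL μ1 * toL T' * tL) * hx
  have hTP : T' * P = X := by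
    apply HahnSeries.ofPowerSeries_injective (Γ := ℤ) (R := CoefRing)
    simpa only [hP, map_mul, map_sub, map_add, map_one, HahnSeries.ofPowerSeries_C,
      ← htX] using hL
  have hP0 : constantCoeff P = -1 := by simp [hP]
  obtain ⟨v, hv⟩ : IsUnit P :=
    isUnit_iff_constantCoeff.mpr (by rw [hP0]; exact isUnit_one.neg)
  have hT'eq : T' = X * (↑v⁻¹ : PowerSeries CoefRing) := by
    have h1 : T' * (↑v : PowerSeries CoefRing) = X := by rw [hv]; exact hTP
    rw [← h1, mul_assoc, Units.mul_inv, mul_one]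
  -- constant coefficients of the inverses
  have hucc : constantCoeff (↑u⁻¹ : PowerSeries CoefRing) = 1 := by
    have h1 : (↑u⁻¹ : PowerSeries CoefRing) * ↑u = 1 := Units.inv_mul u
    have := congrArg (constantCoeff) h1
    rw [map_mul, map_one, hu, hd0, mul_one] at this
    exact this
  have hvcc : constantCoeff (↑v⁻¹ : PowerSeries CoefRing) = -1 := by
    have h1 : (↑v⁻¹ : PowerSeries CoefRing) * ↑v = 1 := Units.inv_mul v
    have := congrArg (constantCoeff) h1
    rw [map_mul, map_one, hv, hP0] at this
    linear_combination -this
  -- part 1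
  have hpart1 : (tL - toL T') * x = (y - Y') * (tL * toL T') := by
    linear_combination tL * hY' - toL T' * hy
  -- the series g
  set g : PowerSeries CoefRing := (↑u⁻¹ : PowerSeries CoefRing) * T' ^ 2 with hgdef
  have hgX : g = ((↑u⁻¹ : PowerSeries CoefRing) * (↑v⁻¹ : PowerSeries CoefRing) ^ 2) * X ^ 2 := by
    rw [hgdef, hT'eq]; ring
  have hune : toL (↑u : PowerSeries CoefRing) ≠ 0 := fun h0 =>
    (Units.ne_zero u) (HahnSeries.ofPowerSeries_injective (by rw [h0, map_zero]))
  have h1 : toL s = tL ^ 2 * toL (↑u : PowerSeries CoefRing) := by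
    rw [hs2, ← hu, map_mul, map_pow, ← htX]
  have h2 : toL (↑u⁻¹ : PowerSeries CoefRing) * toL (↑u : PowerSeries CoefRing) = 1 := by
    rw [← map_mul, Units.inv_mul, map_one]
  have hxt : x * tL ^ 2 = toL (↑u⁻¹ : PowerSeries CoefRing) :=
    mul_right_cancel₀ hune (by linear_combination hx - x * h1 - h2)
  have hT'ne0 : T' ≠ 0 := by
    intro h0; exact hXne (by rw [← hTP, h0, zero_mul])
  have hLT'ne : toL T' ≠ 0 := fun h0 =>
    hT'ne0 (HahnSeries.ofPowerSeries_injective (by rw [h0, map_zero]))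
  have hY'2 : Y' = -(y + CL μ1 * x + CL μ3) :=
    mul_right_cancel₀ hLT'ne (by rw [hY']; linear_combination hT')
  have hg : toL g = x * tL ^ 2 * toL T' ^ 2 := by
    rw [hgdef, map_mul, map_pow, ← hxt]
  refine ⟨hpart1, g, ?_, ?_, ?_, ?_⟩
  · simp [hgX, map_mul, map_pow]
  · simp [hgX, coeff_mul_X_pow']
  · simp only [hgX, coeff_mul_X_pow']
    norm_num [coeff_zero_eq_constantCoeff, map_mul, map_pow, hucc, hvcc]
  · linear_combination (toL T' - tL) * hg - (tL * toL T') ^ 2 * hpart1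
      + (tL * toL T') ^ 3 * hY'2
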